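/- Let F ⊆ E be an extension of differential fields of characteristic zero with derivation δ (write a' := δ(a)), and extend δ to E[[x]] coefficientwise. Let a ∈ E with a' ≠ 0 and let m ∈ ℤ_{≥0}. Suppose there exist c_0,…,c_m ∈ F, not all zero, and a polynomial f ∈ F[x] such that c_0 [e^{ax}]_{2(m+1)} + c_1 [δ(e^{ax})]_{2(m+1)} + … + c_m [δ^m(e^{ax})]_{2(m+1)} = f, where e^{ax} := Σ_{n≥0} a^n x^n / n! ∈ E[[x]] and [g]_N denotes the polynomial obtained from g ∈ E[[x]] by keeping only the coefficients of x^k for 0 ≤ k ≤ N. Then a ∈ F. -/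

import Mathlib

/-- The exponential power series `e^{ax} = Σ_{n ≥ 0} aⁿ xⁿ / n!` in `E⟦X⟧`
(for `E` of characteristic zero). -/
noncomputable def expSeries' {E : Type*} [Field E] [CharZero E] (a : E) : PowerSeries E :=
  PowerSeries.mk fun n => a ^ n / (n.factorial : E)

/-- The coefficientwise extension of a map `d : E → E` to `E⟦X⟧`:
`δ(Σ cᵢ xⁱ) = Σ δ(cᵢ) xⁱ`. -/
noncomputable def coeffWiseMap {E : Type*} [Field E] (d : E → E) (f : PowerSeries E) :
    PowerSeries E :=
  PowerSeries.mk fun n => d (PowerSeries.coeff n f)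

/-- The truncation `[g]_N` of a power series, keeping the coefficients of `x^k`
for `0 ≤ k ≤ N` (Mathlib's `trunc (N + 1)` keeps degrees `< N + 1`). -/
noncomputable def truncAt {E : Type*} [Field E] (N : ℕ) (g : PowerSeries E) : Polynomial E :=
  PowerSeries.trunc (N + 1) g


open Polynomial Finset

section Deriv

variable {E : Type*} [Field E] [CharZero E]

/-- Auxiliary coefficients: `δ^i (a^n) = ∑_l pAux δ a i l * n^(falling l) * a^(n-l)`. -/
noncomputable def pAux (δ : E → E) (a : E) : ℕ → ℕ → E
  | 0, 0 => 1
  | 0, _+1 => 0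
  | i+1, 0 => δ (pAux δ a i 0)
  | i+1, l+1 => δ (pAux δ a i (l+1)) + δ a * pAux δ a i l

variable {δ : E → E} {a : E}

lemma pAux_zero_zero : pAux δ a 0 0 = 1 := by simp [pAux]
lemma pAux_zero_succ (l : ℕ) : pAux δ a 0 (l+1) = 0 := by simp [pAux]
lemma pAux_succ_zero (i : ℕ) : pAux δ a (i+1) 0 = δ (pAux δ a i 0) := by simp [pAux]
lemma pAux_succ_succ (i l : ℕ) :
    pAux δ a (i+1) (l+1) = δ (pAux δ a i (l+1)) + δ a * pAux δ a i l := by simp [pAux]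

variable (hadd : ∀ x y : E, δ (x + y) = δ x + δ y)
variable (hleib : ∀ x y : E, δ (x * y) = δ x * y + x * δ y)

include hadd in
lemma delta_zero : δ 0 = 0 := by
  have := hadd 0 0
  simpa using this.symm

include hleib in
lemma delta_one : δ 1 = 0 := by
  have h := hleib 1 1
  simp only [one_mul, mul_one] at h
  have h2 : δ 1 + δ 1 = δ 1 + 0 := by rw [← h]; ring
  exact add_left_cancel h2

include hadd hleib in
lemma delta_nat (n : ℕ) : δ (n : E) = 0 := by
  induction n with
  | zero => simpa using delta_zero hadd
  | succ k ih =>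
    have := hadd (k : E) 1
    rw [delta_one hleib, ih] at this
    simpa using this

include hadd hleib in
lemma delta_nat_mul (n : ℕ) (x : E) : δ ((n : E) * x) = (n : E) * δ x := by
  rw [hleib, delta_nat hadd hleib, zero_mul, zero_add]

include hadd hleib in
lemma delta_pow (n : ℕ) : δ (a ^ n) = (n : E) * a ^ (n - 1) * δ a := by
  induction n with
  | zero => simpa using delta_one hleib
  | succ k ih =>
    rcases Nat.eq_zero_or_pos k with rfl | hk
    · simpa using hleib a 1
    · rw [pow_succ, hleib, ih]
      have hk1 : a * a ^ (k - 1) = a ^ k := by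
        rw [← pow_succ']
        congr 1
        omega
      push_cast [Nat.add_sub_cancel]
      calc (k:E) * a ^ (k-1) * δ a * a + a ^ k * δ a
          = (k:E) * (a * a ^ (k-1)) * δ a + a ^ k * δ a := by ring
        _ = ((k:E) + 1) * a ^ k * δ a := by rw [hk1]; ring

include hadd in
lemma pAux_eq_zero_of_lt : ∀ i l, i < l → pAux δ a i l = 0 := by
  intro i
  induction i with
  | zero =>
    intro l hl
    match l, hl with
    | l + 1, _ => exact pAux_zero_succ l
  | succ i ih =>
    intro l hl
    match l, hl with
    | l + 1, hl =>
      rw [pAux_succ_succ, ih (l+1) (by omega), ih l (by omega), delta_zero hadd, mul_zero, add_zero]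

include hadd in
lemma pAux_diag : ∀ i, pAux δ a i i = (δ a) ^ i := by
  intro i
  induction i with
  | zero => rw [pow_zero]; exact pAux_zero_zero
  | succ i ih =>
    rw [pAux_succ_succ, pAux_eq_zero_of_lt hadd i (i+1) (by omega), delta_zero hadd, ih, zero_add, pow_succ]
    ring

include hadd hleib in
lemma delta_iterate_pow (i n : ℕ) :
    δ^[i] (a ^ n) =
      ∑ l ∈ range (i + 1), pAux δ a i l * (n.descFactorial l : E) * a ^ (n - l) := by
  induction i with
  | zero => simp [pAux]
  | succ i ih =>
    rw [Function.iterate_succ_apply', ih]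
    have hD : ∀ (s : Finset ℕ) (g : ℕ → E), δ (∑ l ∈ s, g l) = ∑ l ∈ s, δ (g l) := by
      intro s g
      exact map_sum (AddMonoidHom.mk' δ hadd) g s
    rw [hD]
    have hterm : ∀ l, δ (pAux δ a i l * (n.descFactorial l : E) * a ^ (n - l)) =
        δ (pAux δ a i l) * (n.descFactorial l : E) * a ^ (n - l)
          + δ a * pAux δ a i l * (n.descFactorial (l+1) : E) * a ^ (n - (l+1)) := by
      intro l
      rw [hleib, hleib, delta_nat hadd hleib, delta_pow hadd hleib]
      have h1 : (n - l : ℕ) - 1 = n - (l+1) := by omega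
      rw [h1, Nat.descFactorial_succ]
      push_cast
      ring
    rw [Finset.sum_congr rfl (fun l _ => hterm l), Finset.sum_add_distrib]
    -- now reorganize the RHS
    rw [Finset.sum_range_succ' (fun l => pAux δ a (i+1) l * (n.descFactorial l : E) * a ^ (n - l)) (i+1)]
    have hstep : ∀ l, pAux δ a (i+1) (l+1) * (n.descFactorial (l+1) : E) * a ^ (n - (l+1)) =
        δ (pAux δ a i (l+1)) * (n.descFactorial (l+1) : E) * a ^ (n - (l+1))
          + δ a * pAux δ a i l * (n.descFactorial (l+1) : E) * a ^ (n - (l+1)) := by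
      intro l
      rw [pAux_succ_succ]
      ring
    rw [Finset.sum_congr rfl (fun l _ => hstep l), Finset.sum_add_distrib]
    have h2 : ∑ l ∈ range (i+1), δ (pAux δ a i (l+1)) * (n.descFactorial (l+1) : E) * a ^ (n - (l+1))
        + pAux δ a (i+1) 0 * (n.descFactorial 0 : E) * a ^ (n - 0)
        = ∑ l ∈ range (i+1), δ (pAux δ a i l) * (n.descFactorial l : E) * a ^ (n - l) := by
      rw [Finset.sum_range_succ, pAux_eq_zero_of_lt hadd i (i+1) (by omega), delta_zero hadd,
        zero_mul, zero_mul, add_zero]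
      rw [Finset.sum_range_succ' (fun l => δ (pAux δ a i l) * (n.descFactorial l : E) * a ^ (n - l)) i]
      rfl
    rw [add_right_comm, h2]

end Deriv

section Moment

variable {E : Type*} [Field E] [CharZero E]

lemma cast_descFactorial_prod (n l : ℕ) :
    ((n.descFactorial l : ℕ) : E) = ∏ t ∈ range l, ((n : E) - (t : E)) := by
  induction l with
  | zero => simp
  | succ l ih =>
    rw [Nat.descFactorial_succ, prod_range_succ, ← ih]
    rcases lt_or_ge l n with h | h
    · rw [Nat.cast_mul, Nat.cast_sub h.le]
      ring
    · rcases eq_or_lt_of_le h with rfl | h2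
      · simp [Nat.sub_self]
      · rw [Nat.descFactorial_eq_zero_iff_lt.2 h2]
        simp

lemma eq_zero_of_eval_nat_zero {j : ℕ} (G : E[X]) (hdeg : G.natDegree ≤ j)
    (hev : ∀ r < j + 1, G.eval (r : E) = 0) : G = 0 := by
  classical
  apply Polynomial.eq_zero_of_natDegree_lt_card_of_eval_eq_zero' G
    ((range (j+1)).image (Nat.cast : ℕ → E))
  · intro x hx
    obtain ⟨r, hr, rfl⟩ := Finset.mem_image.1 hx
    exact hev r (Finset.mem_range.1 hr)
  · rw [Finset.card_image_of_injective _ Nat.cast_injective, Finset.card_range]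
    omega

lemma moment_vanish {j : ℕ} (P : E[X]) (hdeg : P.natDegree ≤ j) (hj : P.coeff j ≠ 0)
    (s : Finset ℕ) (u : ℕ → E)
    (hmom : ∀ k, ∑ y ∈ s, u y * ((P.hasseDeriv k).eval (y : E)) = 0) :
    ∀ g : E[X], g.natDegree ≤ j → ∑ y ∈ s, u y * g.eval (y : E) = 0 := by
  suffices key : ∀ n, ∀ g : E[X], g.natDegree ≤ j → g.natDegree ≤ n →
      ∑ y ∈ s, u y * g.eval (y : E) = 0 by
    intro g hg
    exact key g.natDegree g hg le_rfl
  intro n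
  induction n using Nat.strong_induction_on with
  | _ n ih =>
    intro g hgj hgn
    by_cases hg0 : g = 0
    · simp [hg0]
    set d := g.natDegree with hd
    set k := j - d with hk
    have hkj : k ≤ j := by omega
    have hdk : d + k = j := by omega
    set h := P.hasseDeriv k with hh
    have hhcoeff : h.coeff d = (j.choose k : E) * P.coeff j := by
      rw [hh, Polynomial.hasseDeriv_coeff, hdk]
    have hα : h.coeff d ≠ 0 := by
      rw [hhcoeff]
      exact mul_ne_zero (Nat.cast_ne_zero.2 (Nat.choose_pos hkj).ne') hj
    have hhdeg : h.natDegree ≤ d := by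
      calc h.natDegree ≤ P.natDegree - k := Polynomial.natDegree_hasseDeriv_le P k
        _ ≤ d := by omega
    set γ := g.coeff d / h.coeff d with hγ
    set g' := g - C γ * h with hg'
    have hg'deg : g'.natDegree ≤ d := by
      apply le_trans (Polynomial.natDegree_sub_le _ _)
      simp only [max_le_iff]
      exact ⟨le_rfl, le_trans (Polynomial.natDegree_C_mul_le _ _) hhdeg⟩
    have hg'coeff : g'.coeff d = 0 := by
      simp only [hg', Polynomial.coeff_sub, Polynomial.coeff_C_mul, hγ]
      field_simp
      ring
    have hsum : ∑ y ∈ s, u y * g.eval (y : E)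
        = ∑ y ∈ s, u y * g'.eval (y : E) + γ * ∑ y ∈ s, u y * h.eval (y : E) := by
      have hgg : g = g' + C γ * h := by rw [hg']; ring
      rw [Finset.mul_sum, ← Finset.sum_add_distrib]
      apply Finset.sum_congr rfl
      intro y _
      conv_lhs => rw [hgg]
      simp only [Polynomial.eval_add, Polynomial.eval_mul, Polynomial.eval_C]
      ring
    rw [hsum, hmom k, mul_zero, add_zero]
    rcases Nat.eq_zero_or_pos d with hd0 | hdpos
    · -- g' has natDegree 0 and coeff 0 = 0, so g' = 0
      have : g' = 0 := by
        have h1 : g' = C (g'.coeff 0) := Polynomial.eq_C_of_natDegree_le_zero (by omega)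
        rw [h1, show g'.coeff 0 = 0 from by rw [← hd0]; exact hg'coeff, map_zero]
      simp [this]
    · have hg'deg2 : g'.natDegree ≤ d - 1 := by
        rw [Polynomial.natDegree_le_iff_coeff_eq_zero]
        intro N hN
        rcases eq_or_lt_of_le (Nat.succ_le_of_lt hN) with h1 | h2
        · rw [show N = d by omega]
          exact hg'coeff
        · exact Polynomial.coeff_eq_zero_of_natDegree_lt (by omega)
      exact ih (d - 1) (by omega) g' (by omega) hg'deg2

lemma moments_of_comb_eq_zero (P : E[X]) (s : Finset ℕ) (u : ℕ → E)
    (hR : ∑ y ∈ s, C (u y) * P.comp (X + C (y : E)) = 0) :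
    ∀ k, ∑ y ∈ s, u y * ((P.hasseDeriv k).eval (y : E)) = 0 := by
  intro k
  have := congrArg (fun q : E[X] => q.coeff k) hR
  simp only [Polynomial.finset_sum_coeff, Polynomial.coeff_C_mul, Polynomial.coeff_zero] at this
  rw [← this]
  apply Finset.sum_congr rfl
  intro y _
  congr 1
  rw [← Polynomial.taylor_apply, Polynomial.taylor_coeff]

end Moment


section Main

open Polynomial Finset

variable {E : Type*} [Field E] [CharZero E]

lemma coeff_coeffWiseMap (δ : E → E) (g : PowerSeries E) (n : ℕ) :
    PowerSeries.coeff n (coeffWiseMap δ g) = δ (PowerSeries.coeff n g) := by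
  simp [coeffWiseMap]

lemma coeff_iterate_coeffWiseMap (δ : E → E) (g : PowerSeries E) (i n : ℕ) :
    PowerSeries.coeff n ((coeffWiseMap δ)^[i] g) = δ^[i] (PowerSeries.coeff n g) := by
  induction i generalizing g with
  | zero => simp
  | succ i ih =>
    rw [Function.iterate_succ_apply, ih, coeff_coeffWiseMap, ← Function.iterate_succ_apply]

open Polynomial in
lemma natDegree_prod_X_sub_C_nat (s : Finset ℕ) :
    (∏ t ∈ s, (X - C (t : E))).natDegree = s.card := by
  classical
  induction s using Finset.induction with
  | empty => simp
  | insert a s h ih =>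
    rw [Finset.prod_insert h,
      Polynomial.natDegree_mul (Polynomial.X_sub_C_ne_zero _)
        (Polynomial.monic_prod_of_monic _ _ (fun t _ => Polynomial.monic_X_sub_C _)).ne_zero,
      Polynomial.natDegree_X_sub_C, ih, Finset.card_insert_of_notMem h]
    omega

variable {δ : E → E}
variable (hadd : ∀ x y : E, δ (x + y) = δ x + δ y)
variable (hleib : ∀ x y : E, δ (x * y) = δ x * y + x * δ y)

include hadd hleib in
lemma delta_inv_nat_mul (k : ℕ) (hk : k ≠ 0) (x : E) :
    δ ((k : E)⁻¹ * x) = (k : E)⁻¹ * δ x := by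
  have hkE : (k : E) ≠ 0 := Nat.cast_ne_zero.2 hk
  have h1 : (k : E) * ((k : E)⁻¹ * x) = x := by field_simp
  have h2 := delta_nat_mul hadd hleib k ((k : E)⁻¹ * x)
  rw [h1] at h2
  rw [h2, ← mul_assoc, inv_mul_cancel₀ hkE, one_mul]

include hadd hleib in
lemma delta_iterate_inv_nat_mul (i : ℕ) (k : ℕ) (hk : k ≠ 0) (x : E) :
    δ^[i] ((k : E)⁻¹ * x) = (k : E)⁻¹ * δ^[i] x := by
  induction i generalizing x with
  | zero => simp
  | succ i ih =>
    rw [Function.iterate_succ_apply, delta_inv_nat_mul hadd hleib k hk,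
      Function.iterate_succ_apply, ih]

end Main

open Polynomial Finset

/-- **Core lemma for differential fields.**  Let `F ⊆ E` be an extension of differential
fields of characteristic zero with derivation `δ`, extended coefficientwise to `E⟦X⟧`.
Let `a ∈ E` with `δ a ≠ 0`.  If some nontrivial `F`-linear combination of the truncations
`[δ^i(e^{ax})]_{2(m+1)}`, `0 ≤ i ≤ m`, is a polynomial with all coefficients in `F`,
then `a ∈ F`. -/
theorem core_lemma_differential
    {E : Type*} [Field E] [CharZero E] (F : Subfield E)
    (δ : E → E)
    (hadd : ∀ x y : E, δ (x + y) = δ x + δ y)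
    (hleib : ∀ x y : E, δ (x * y) = δ x * y + x * δ y)
    (hFδ : ∀ x ∈ F, δ x ∈ F)
    (a : E) (ha : δ a ≠ 0) (m : ℕ)
    (c : ℕ → E) (hcF : ∀ i ≤ m, c i ∈ F) (hc0 : ∃ i ≤ m, c i ≠ 0)
    (f : Polynomial E) (hfF : ∀ k, f.coeff k ∈ F)
    (hcomb : ∑ i ∈ Finset.range (m + 1),
        Polynomial.C (c i) * truncAt (2 * (m + 1)) ((coeffWiseMap δ)^[i] (expSeries' a)) = f) :
    a ∈ F := by
  classical
  by_cases ha0 : a = 0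
  · rw [ha0]; exact F.zero_mem
  -- the sequence w n = ∑ i, c i * δ^[i] (a ^ n)
  set w : ℕ → E := fun n => ∑ i ∈ range (m + 1), c i * δ^[i] (a ^ n) with hw
  have hwF : ∀ n, n ≤ 2 * m + 2 → w n ∈ F := by
    intro n hn
    have hfac : (n.factorial : E) ≠ 0 := Nat.cast_ne_zero.2 n.factorial_ne_zero
    have hco := congrArg (fun p : Polynomial E => p.coeff n) hcomb
    simp only [Polynomial.finset_sum_coeff, Polynomial.coeff_C_mul] at hco
    have htr : ∀ i, (truncAt (2 * (m + 1)) ((coeffWiseMap δ)^[i] (expSeries' a))).coeff n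
        = δ^[i] (a ^ n / (n.factorial : E)) := by
      intro i
      rw [truncAt, PowerSeries.coeff_trunc, if_pos (by omega), coeff_iterate_coeffWiseMap]
      congr 1
      simp [expSeries']
    simp only [htr] at hco
    have hiter : ∀ i, δ^[i] (a ^ n / (n.factorial : E))
        = (n.factorial : E)⁻¹ * δ^[i] (a ^ n) := by
      intro i
      rw [div_eq_mul_inv, mul_comm]
      exact delta_iterate_inv_nat_mul hadd hleib i n.factorial n.factorial_ne_zero _
    simp only [hiter] at hco
    have hwn : w n = (n.factorial : E) * f.coeff n := by
      rw [hw, ← hco, Finset.mul_sum]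
      apply Finset.sum_congr rfl
      intro i _
      field_simp
    rw [hwn]
    exact F.mul_mem (natCast_mem F _) (hfF n)
  -- choose j the largest index with c j ≠ 0
  set S : Finset ℕ := (range (m + 1)).filter (fun i => c i ≠ 0) with hS
  have hSne : S.Nonempty := by
    obtain ⟨i, him, hic⟩ := hc0
    exact ⟨i, by simp [hS, Finset.mem_filter, Finset.mem_range]; exact ⟨by omega, hic⟩⟩
  set j : ℕ := S.max' hSne with hj
  have hjS : j ∈ S := S.max'_mem hSne
  have hjm : j ≤ m := by
    have := Finset.mem_range.1 (Finset.mem_filter.1 hjS).1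
    omega
  have hcj : c j ≠ 0 := (Finset.mem_filter.1 hjS).2
  have hmax : ∀ i, i ≤ m → j < i → c i = 0 := by
    intro i him hji
    by_contra hci
    have : i ∈ S := Finset.mem_filter.2 ⟨Finset.mem_range.2 (by omega), hci⟩
    have := S.le_max' i this
    omega
  -- the coefficients Q l
  set Q : ℕ → E := fun l => ∑ i ∈ range (m + 1), c i * pAux δ a i l with hQ
  have hQj : Q j = c j * (δ a) ^ j := by
    rw [hQ]
    simp only
    rw [Finset.sum_eq_single j]
    · rw [pAux_diag hadd]
    · intro b hb hbj
      rcases lt_or_gt_of_ne hbj with h | h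
      · rw [pAux_eq_zero_of_lt hadd b j h, mul_zero]
      · rw [hmax b (by simpa [Nat.lt_succ_iff] using Finset.mem_range.1 hb) h, zero_mul]
    · intro h
      exact absurd (Finset.mem_range.2 (by omega)) h
  have hQj0 : Q j ≠ 0 := hQj ▸ mul_ne_zero hcj (pow_ne_zero _ ha)
  have hQzero : ∀ l, j < l → Q l = 0 := by
    intro l hl
    rw [hQ]
    apply Finset.sum_eq_zero
    intro i hi
    rcases le_or_gt i j with h | h
    · rw [pAux_eq_zero_of_lt hadd i l (by omega), mul_zero]
    · rw [hmax i (by simpa [Nat.lt_succ_iff] using Finset.mem_range.1 hi) h, zero_mul]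
  -- w n in terms of Q
  have hwQ : ∀ n, w n = ∑ l ∈ range (j + 1), Q l * (n.descFactorial l : E) * a ^ (n - l) := by
    intro n
    rw [hw]
    calc ∑ i ∈ range (m+1), c i * δ^[i] (a ^ n)
        = ∑ i ∈ range (m+1), ∑ l ∈ range (m+1),
            c i * (pAux δ a i l * (n.descFactorial l : E) * a ^ (n - l)) := by
          apply Finset.sum_congr rfl
          intro i hi
          rw [delta_iterate_pow hadd hleib, Finset.mul_sum]
          apply Finset.sum_subset
          · apply Finset.range_subset_range.2
            have := Finset.mem_range.1 hi
            omega
          · intro l hl hli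
            rw [pAux_eq_zero_of_lt hadd i l (by
              simp only [Finset.mem_range] at hli ⊢
              omega)]
            ring
      _ = ∑ l ∈ range (m+1), (∑ i ∈ range (m+1), c i * pAux δ a i l)
            * ((n.descFactorial l : E) * a ^ (n - l)) := by
          rw [Finset.sum_comm]
          apply Finset.sum_congr rfl
          intro l _
          rw [Finset.sum_mul]
          apply Finset.sum_congr rfl
          intro i _
          ring
      _ = ∑ l ∈ range (j+1), Q l * (n.descFactorial l : E) * a ^ (n - l) := by
          rw [← Finset.sum_subset (Finset.range_subset_range.2 (show j+1 ≤ m+1 by omega))]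
          · apply Finset.sum_congr rfl
            intro l _
            rw [hQ]
            dsimp only
            rw [mul_assoc]
          · intro l hl hlj
            have hz := hQzero l (by
              simp only [Finset.mem_range] at hlj hl
              omega)
            rw [hQ] at hz
            dsimp only at hz
            rw [hz, zero_mul]
  -- the polynomial P with w n = P.eval n * a^n
  set P : Polynomial E :=
    ∑ l ∈ range (j + 1), C (Q l * (a⁻¹) ^ l) * ∏ t ∈ range l, (X - C (t : E)) with hP
  have hProdMonic : ∀ l : ℕ, (∏ t ∈ range l, (X - C (t : E))).Monic :=
    fun l => monic_prod_of_monic _ _ (fun t _ => monic_X_sub_C _)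
  have hProdDeg : ∀ l : ℕ, (∏ t ∈ range l, (X - C (t : E))).natDegree = l := by
    intro l
    induction l with
    | zero => simp
    | succ l ih =>
      rw [Finset.prod_range_succ,
        Polynomial.natDegree_mul (hProdMonic l).ne_zero (Polynomial.X_sub_C_ne_zero _), ih,
        Polynomial.natDegree_X_sub_C]
  have hPdeg : P.natDegree ≤ j := by
    rw [hP]
    apply Polynomial.natDegree_sum_le_of_forall_le
    intro l hl
    apply le_trans (Polynomial.natDegree_C_mul_le _ _)
    rw [hProdDeg]
    exact Nat.lt_succ_iff.1 (Finset.mem_range.1 hl)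
  have hPcoeff : P.coeff j = Q j * (a⁻¹) ^ j := by
    rw [hP, Polynomial.finset_sum_coeff, Finset.sum_eq_single j]
    · rw [Polynomial.coeff_C_mul]
      have h1 := (hProdMonic j).coeff_natDegree
      rw [hProdDeg j] at h1
      rw [h1, mul_one]
    · intro b hb hbj
      rw [Polynomial.coeff_C_mul,
        Polynomial.coeff_eq_zero_of_natDegree_lt (by
          rw [hProdDeg]
          have := Finset.mem_range.1 hb
          omega), mul_zero]
    · intro h
      exact absurd (Finset.mem_range.2 (by omega)) h
  have hPj0 : P.coeff j ≠ 0 := by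
    rw [hPcoeff]
    exact mul_ne_zero hQj0 (pow_ne_zero _ (inv_ne_zero ha0))
  have hPeval : ∀ n : ℕ, w n = P.eval (n : E) * a ^ n := by
    intro n
    rw [hwQ n, hP, Polynomial.eval_finset_sum, Finset.sum_mul]
    apply Finset.sum_congr rfl
    intro l hl
    rw [Polynomial.eval_mul, Polynomial.eval_C, Polynomial.eval_prod]
    simp only [Polynomial.eval_sub, Polynomial.eval_X, Polynomial.eval_natCast,
      Polynomial.eval_C]
    rw [← cast_descFactorial_prod]
    rcases le_or_gt l n with h | h
    · rw [pow_sub₀ a ha0 h, ← inv_pow]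
      ring
    · rw [Nat.descFactorial_eq_zero_iff_lt.2 h]
      simp
  -- the Hankel matrix
  set HE : Matrix (Fin (j+1)) (Fin (j+1)) E := Matrix.of (fun r c => w (r.1 + c.1)) with hHE
  have hkernel : ∀ v : Fin (j+1) → E, HE.mulVec v = 0 → v = 0 := by
    intro v hv
    set u : ℕ → E := fun y => if h : y < j + 1 then v ⟨y, h⟩ * a ^ y else 0 with hu
    set G : Polynomial E := ∑ y ∈ range (j+1), C (u y) * P.comp (X + C (y : E)) with hG
    have hGdeg : G.natDegree ≤ j := by
      rw [hG]
      apply Polynomial.natDegree_sum_le_of_forall_le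
      intro y hy
      apply le_trans (Polynomial.natDegree_C_mul_le _ _)
      apply le_trans Polynomial.natDegree_comp_le
      rw [Polynomial.natDegree_X_add_C, mul_one]
      exact hPdeg
    have hGev : ∀ r, r < j + 1 → G.eval (r : E) = 0 := by
      intro r hr
      have hvr := congrFun hv ⟨r, hr⟩
      simp only [Matrix.mulVec, dotProduct, Pi.zero_apply] at hvr
      have hexp : G.eval (r : E) * a ^ r = 0 := by
        rw [hG, Polynomial.eval_finset_sum, Finset.sum_mul]
        rw [← hvr]
        rw [← Fin.sum_univ_eq_sum_range
          (fun y => (C (u y) * P.comp (X + C (y : E))).eval (r : E) * a ^ r) (j+1)]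
        apply Finset.sum_congr rfl
        intro y _
        rw [Polynomial.eval_mul, Polynomial.eval_C, Polynomial.eval_comp,
          Polynomial.eval_add, Polynomial.eval_X, Polynomial.eval_C]
        rw [hu]
        dsimp only
        rw [dif_pos y.2, Fin.eta]
        rw [show HE ⟨r, hr⟩ y = w (r + y.1) from rfl, hPeval (r + y.1)]
        push_cast
        rw [pow_add]
        ring
      exact (mul_eq_zero.1 hexp).resolve_right (pow_ne_zero _ ha0)
    have hG0 : G = 0 := eq_zero_of_eval_nat_zero G hGdeg hGev
    have hvan := moment_vanish P hPdeg hPj0 (range (j+1)) u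
      (moments_of_comb_eq_zero P (range (j+1)) u hG0)
    funext c0
    set g : Polynomial E := ∏ t ∈ (range (j+1)).erase c0.1, (X - C (t : E)) with hg
    have hgdeg : g.natDegree ≤ j := by
      rw [hg, natDegree_prod_X_sub_C_nat, Finset.card_erase_of_mem
        (Finset.mem_range.2 c0.2), Finset.card_range]
      omega
    have hgev : ∀ y, y < j + 1 → y ≠ c0.1 → g.eval (y : E) = 0 := by
      intro y hy hyne
      rw [hg, Polynomial.eval_prod]
      apply Finset.prod_eq_zero (Finset.mem_erase.2 ⟨hyne, Finset.mem_range.2 hy⟩)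
      simp
    have hval := hvan g hgdeg
    rw [Finset.sum_eq_single c0.1] at hval
    · have hgc0 : g.eval (c0.1 : E) ≠ 0 := by
        rw [hg, Polynomial.eval_prod]
        apply Finset.prod_ne_zero_iff.2
        intro t ht
        simp only [Polynomial.eval_sub, Polynomial.eval_X, Polynomial.eval_C]
        intro heq
        have h1 : ((c0.1 : ℕ) : E) = (t : E) := sub_eq_zero.1 heq
        exact (Finset.mem_erase.1 ht).1 (Nat.cast_injective h1.symm)
      have hu0 : u c0.1 = 0 := by
        rcases mul_eq_zero.1 hval with h | h
        · exact h
        · exact absurd h hgc0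
      rw [hu] at hu0
      dsimp only at hu0
      rw [dif_pos c0.2, Fin.eta] at hu0
      have := (mul_eq_zero.1 hu0).resolve_right (pow_ne_zero _ ha0)
      simpa using this
    · intro y hy hyne
      rw [hgev y (Finset.mem_range.1 hy) hyne, mul_zero]
    · intro hmem
      exact absurd (Finset.mem_range.2 c0.2) hmem
  have hdetE : HE.det ≠ 0 := by
    intro h
    obtain ⟨v, hv0, hv⟩ := Matrix.exists_mulVec_eq_zero_iff.2 h
    exact hv0 (hkernel v hv)
  set HF : Matrix (Fin (j+1)) (Fin (j+1)) F := Matrix.of (fun r c =>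
    (⟨w (r.1 + c.1), hwF _ (by
      have hr := r.2
      have hc := c.2
      omega)⟩ : F)) with hHF
  have hmap : (F.subtype).mapMatrix HF = HE := by
    ext r c
    simp [hHF, hHE]
  have hdetF : HF.det ≠ 0 := by
    intro h
    apply hdetE
    rw [← hmap, ← RingHom.map_det, h, map_zero]
  set bF : Fin (j+1) → F := fun r => ⟨w (r.1 + (j+1)), hwF _ (by
    have hr := r.2
    omega)⟩ with hbF
  set x' : Fin (j+1) → F := HF⁻¹.mulVec bF with hx'
  have hsolve : HF.mulVec x' = bF := by
    rw [hx', Matrix.mulVec_mulVec, Matrix.mul_nonsing_inv _ (isUnit_iff_ne_zero.2 hdetF),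
      Matrix.one_mulVec]
  have hsys : ∀ r : Fin (j+1),
      ∑ y : Fin (j+1), (x' y : E) * w (r.1 + y.1) = w (r.1 + (j+1)) := by
    intro r
    have h1 := congrArg (fun g => ((g r : F) : E)) hsolve
    simp only [Matrix.mulVec, dotProduct] at h1
    rw [show w (r.1 + (j+1)) = ((bF r : F) : E) from rfl, ← h1]
    rw [show ((↑(∑ c_1 : Fin (j+1), HF r c_1 * x' c_1) : E))
        = ∑ c_1 : Fin (j+1), ((HF r c_1 : E) * (x' c_1 : E)) from by push_cast; rfl]
    apply Finset.sum_congr rfl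
    intro y _
    rw [show ((HF r y : F) : E) = w (r.1 + y.1) from rfl, mul_comm]
  -- final extraction of a
  set xj : F := x' ⟨j, Nat.lt_succ_self j⟩ with hxj
  set u2 : ℕ → E := fun y =>
    if y = j + 1 then a ^ (j+1)
    else (if h : y < j + 1 then -((x' ⟨y, h⟩ : E) * a ^ y) else 0) with hu2
  set G2 : Polynomial E := ∑ y ∈ range (j+2), C (u2 y) * P.comp (X + C (y : E)) with hG2
  have hG2deg : G2.natDegree ≤ j := by
    rw [hG2]
    apply Polynomial.natDegree_sum_le_of_forall_le
    intro y hy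
    apply le_trans (Polynomial.natDegree_C_mul_le _ _)
    apply le_trans Polynomial.natDegree_comp_le
    rw [Polynomial.natDegree_X_add_C, mul_one]
    exact hPdeg
  have hG2ev : ∀ r, r < j + 1 → G2.eval (r : E) = 0 := by
    intro r hr
    have hsr := hsys ⟨r, hr⟩
    have hexp : G2.eval (r : E) * a ^ r = 0 := by
      rw [hG2, Polynomial.eval_finset_sum, Finset.sum_mul, Finset.sum_range_succ]
      have hterm : ∀ y, y < j + 1 →
          (C (u2 y) * P.comp (X + C (y : E))).eval (r : E) * a ^ r
            = -((if h : y < j + 1 then (x' ⟨y, h⟩ : E) else 0) * w (r + y)) := by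
        intro y hy
        rw [Polynomial.eval_mul, Polynomial.eval_C, Polynomial.eval_comp,
          Polynomial.eval_add, Polynomial.eval_X, Polynomial.eval_C]
        rw [hu2]
        dsimp only
        rw [if_neg (by omega), dif_pos hy, dif_pos hy, hPeval (r + y)]
        push_cast
        rw [pow_add]
        ring
      rw [Finset.sum_congr rfl (fun y hy => hterm y (Finset.mem_range.1 hy))]
      rw [Polynomial.eval_mul, Polynomial.eval_C, Polynomial.eval_comp,
        Polynomial.eval_add, Polynomial.eval_X, Polynomial.eval_C]
      rw [hu2]
      dsimp only
      rw [if_pos rfl]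
      have hcast : ((r : E) + (((j+1) : ℕ) : E)) = (((r + (j+1)) : ℕ) : E) := by
        push_cast
        ring
      rw [hcast]
      have h2 : a ^ (j+1) * P.eval (((r + (j+1)) : ℕ) : E) * a ^ r = w (r + (j+1)) := by
        rw [hPeval (r + (j+1)), pow_add]
        ring
      rw [h2]
      have h3 : ∑ y ∈ range (j+1),
          -((if h : y < j + 1 then ((x' ⟨y, h⟩ : F) : E) else 0) * w (r + y))
          = -(∑ y : Fin (j+1), ((x' y : F) : E) * w (r + y.1)) := by
        rw [← Fin.sum_univ_eq_sum_range
          (fun y => -((if h : y < j + 1 then ((x' ⟨y, h⟩ : F) : E) else 0) * w (r + y))) (j+1)]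
        rw [← Finset.sum_neg_distrib]
        apply Finset.sum_congr rfl
        intro y _
        rw [dif_pos y.2, Fin.eta]
      rw [h3, hsr]
      ring
    exact (mul_eq_zero.1 hexp).resolve_right (pow_ne_zero _ ha0)
  have hG20 : G2 = 0 := eq_zero_of_eval_nat_zero G2 hG2deg hG2ev
  have hvan2 := moment_vanish P hPdeg hPj0 (range (j+2)) u2
    (moments_of_comb_eq_zero P (range (j+2)) u2 hG20)
  set g2 : Polynomial E := ∏ t ∈ range j, (X - C (t : E)) with hg2
  have hg2deg : g2.natDegree ≤ j := by
    rw [hg2, natDegree_prod_X_sub_C_nat, Finset.card_range]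
  have hg2eval : ∀ y : ℕ, g2.eval (y : E) = (y.descFactorial j : E) := by
    intro y
    rw [hg2, Polynomial.eval_prod, cast_descFactorial_prod]
    apply Finset.prod_congr rfl
    intro t _
    simp
  have hval2 := hvan2 g2 hg2deg
  rw [Finset.sum_range_succ, Finset.sum_eq_single j] at hval2
  · -- hval2 : u2 j * g2.eval j + u2 (j+1) * g2.eval (j+1) = 0
    rw [hg2eval j, hg2eval (j+1), Nat.descFactorial_self] at hval2
    have hdf : (j+1).descFactorial j = (j+1).factorial := by
      have h1 : (j+1).descFactorial (j+1) = (j + 1 - j) * (j+1).descFactorial j :=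
        Nat.descFactorial_succ (j+1) j
      rw [show j + 1 - j = 1 from by omega, one_mul] at h1
      rw [← h1, Nat.descFactorial_self]
    rw [hdf] at hval2
    have hu2j : u2 j = -((xj : E) * a ^ j) := by
      rw [hu2]
      dsimp only
      rw [if_neg (by omega), dif_pos (Nat.lt_succ_self j), hxj]
    have hu2j1 : u2 (j+1) = a ^ (j+1) := by
      rw [hu2]
      dsimp only
      rw [if_pos rfl]
    rw [hu2j, hu2j1] at hval2
    -- -(xj * a^j) * j! + a^(j+1) * (j+1)! = 0
    have hfj : ((j.factorial : ℕ) : E) ≠ 0 := Nat.cast_ne_zero.2 j.factorial_ne_zero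
    have haj : a ^ j ≠ 0 := pow_ne_zero _ ha0
    have key : a * ((j : E) + 1) = (xj : E) := by
      have h3 : a ^ (j+1) * ((j+1).factorial : E) = (xj : E) * a ^ j * (j.factorial : E) := by
        linear_combination hval2
      rw [pow_succ, Nat.factorial_succ] at h3
      push_cast at h3
      -- h3 : a^j * a * ((j+1) * j!) = xj * a^j * j!
      have h4 := mul_right_cancel₀ hfj (by linear_combination h3 :
        (a ^ j * (a * ((j:E)+1))) * (j.factorial : E) = ((xj : E) * a ^ j) * (j.factorial : E))
      have h5 := mul_left_cancel₀ haj (by linear_combination h4 :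
        a ^ j * (a * ((j:E)+1)) = a ^ j * (xj : E))
      exact h5
    have hj1ne : ((j : E) + 1) ≠ 0 := by
      have : (((j+1 : ℕ)) : E) ≠ 0 := Nat.cast_ne_zero.2 (by omega)
      push_cast at this
      exact this
    have haeq : a = (xj : E) * ((j : E) + 1)⁻¹ := by
      rw [← key, mul_assoc, mul_inv_cancel₀ hj1ne, mul_one]
    rw [haeq]
    apply F.mul_mem xj.2
    apply F.inv_mem
    have : (((j + 1 : ℕ)) : E) ∈ F := natCast_mem F (j+1)
    push_cast at this
    exact this
  · intro y hy hyne
    rw [hg2eval y,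
      Nat.descFactorial_eq_zero_iff_lt.2 (by
        have := Finset.mem_range.1 hy
        omega), Nat.cast_zero, mul_zero]
  · intro hmem
    exact absurd (Finset.mem_range.2 (Nat.lt_succ_self j)) hmem
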